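/- In the L-period model with L ≥ 3 and γ_{i,j} = α·δ^{i−j−1} for α > 0, 0 ≤ δ ≤ 1: for each i ≥ 2, the total path weight from i to 1 satisfies Σ_{p ∈ P[i→1]} W(p) = −α(δ − α)^{i−2}. Consequently, if δ > α then Σ_{p ∈ P[i→j]} W(p) < 0 for all i > j, and the pseudo-true fundamentals satisfy μᵢ* < μᵢ• for all i and every cutoff vector (c₁,...,c_L) ∈ ℝ^L. -/

import Mathlib

open MeasureTheory Set

/-- Gaussian density with mean `a` and variance `s2`. -/
noncomputable def gauss (a s2 x : ℝ) : ℝ :=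
  (Real.sqrt (2 * Real.pi * s2))⁻¹ * Real.exp (-(x - a) ^ 2 / (2 * s2))

/-- Mean of a `N(a, s2)` random variable truncated above at `c`, i.e. `E[X | X ≤ c]`. -/
noncomputable def truncMean (a s2 c : ℝ) : ℝ :=
  (∫ x in Iic c, x * gauss a s2 x) / (∫ x in Iic c, gauss a s2 x)

/-- The weight of a path given as the list of its nodes: the product of the edge
weights `−γ_{a,b}` over consecutive nodes `a, b`. -/
noncomputable def listWeight (γ : ℕ → ℕ → ℝ) : List ℕ → ℝ
  | a :: b :: rest => (-(γ a b)) * listWeight γ (b :: rest)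
  | _ => 1

/-- The total weight `Σ_{p ∈ P[i→j]} W(p)` over all strictly decreasing paths from
`i` to `j`. -/
noncomputable def pathWeightSum (γ : ℕ → ℕ → ℝ) (i j : ℕ) : ℝ :=
  ∑ S ∈ (Finset.Ioo j i).powerset,
    listWeight γ (i :: ((S.sort (· ≤ ·)).reverse ++ [j]))

section TruncAux

variable {a s2 c : ℝ}

lemma gauss_pos (hs2 : 0 < s2) (a x : ℝ) : 0 < gauss a s2 x := by
  have : 0 < Real.sqrt (2 * Real.pi * s2) := Real.sqrt_pos.mpr (by positivity)
  exact mul_pos (inv_pos.mpr this) (Real.exp_pos _)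

lemma exp_arg_eq (a x : ℝ) :
    -(x - a) ^ 2 / (2 * s2) = -(2 * s2)⁻¹ * ((x - a) ^ 2) := by
  rw [neg_div, div_eq_inv_mul, neg_mul]

lemma integrable_gauss (hs2 : 0 < s2) (a : ℝ) : Integrable (gauss a s2) := by
  have h1 : Integrable (fun x : ℝ => Real.exp (-(2 * s2)⁻¹ * x ^ 2)) :=
    integrable_exp_neg_mul_sq (by positivity)
  have h2 := (h1.comp_sub_right a).const_mul (Real.sqrt (2 * Real.pi * s2))⁻¹
  refine h2.congr (Filter.Eventually.of_forall fun x => ?_)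
  show _ = gauss a s2 x
  unfold gauss
  rw [exp_arg_eq]

lemma integrable_sub_mul_gauss (hs2 : 0 < s2) (a : ℝ) :
    Integrable (fun x => (x - a) * gauss a s2 x) := by
  have h1 : Integrable (fun x : ℝ => x * Real.exp (-(2 * s2)⁻¹ * x ^ 2)) :=
    integrable_mul_exp_neg_mul_sq (by positivity)
  have h2 := (h1.comp_sub_right a).const_mul (Real.sqrt (2 * Real.pi * s2))⁻¹
  refine h2.congr (Filter.Eventually.of_forall fun x => ?_)
  show _ = (x - a) * gauss a s2 x
  unfold gauss
  rw [exp_arg_eq]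
  ring

lemma integral_sub_mul_gauss (hs2 : 0 < s2) (a c : ℝ) :
    ∫ x in Iic c, (x - a) * gauss a s2 x = -s2 * gauss a s2 c := by
  set C := (Real.sqrt (2 * Real.pi * s2))⁻¹ with hC
  have hderiv : ∀ x ∈ Iic c, HasDerivAt (fun x => -s2 * gauss a s2 x)
      ((x - a) * gauss a s2 x) x := by
    intro x _
    have h1 : HasDerivAt (fun x : ℝ => x - a) 1 x := (hasDerivAt_id x).sub_const a
    have h2 : HasDerivAt (fun x : ℝ => -(x - a) ^ 2 / (2 * s2))
        (-(2 * (x - a) ^ 1 * 1) / (2 * s2)) x := (h1.pow 2).neg.div_const (2 * s2)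
    have h3 := ((h2.exp.const_mul C).const_mul (-s2))
    refine HasDerivAt.congr_deriv h3 ?_
    unfold gauss; rw [hC]; field_simp
  have htend : Filter.Tendsto (fun x => -s2 * gauss a s2 x) Filter.atBot (nhds 0) := by
    have h0 : Filter.Tendsto (fun x : ℝ => x - a) Filter.atBot Filter.atBot :=
      Filter.tendsto_atBot_add_const_right _ _ Filter.tendsto_id
    have h1 : Filter.Tendsto (fun x : ℝ => |x - a|) Filter.atBot Filter.atTop :=
      Filter.tendsto_abs_atBot_atTop.comp h0
    have h2 : Filter.Tendsto (fun x : ℝ => (x - a) ^ 2) Filter.atBot Filter.atTop := by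
      refine Filter.Tendsto.congr (fun x => ?_) ((Filter.tendsto_pow_atTop two_ne_zero).comp h1)
      simp [sq_abs]
    have h3 : Filter.Tendsto (fun x : ℝ => -(x - a) ^ 2 / (2 * s2)) Filter.atBot Filter.atBot := by
      rw [Filter.tendsto_atBot]
      intro b
      filter_upwards [h2.eventually_ge_atTop (-(b * (2 * s2)))] with x hx
      rw [div_le_iff₀ (by positivity)]
      linarith
    have h4 : Filter.Tendsto (fun x => Real.exp (-(x - a) ^ 2 / (2 * s2)))
        Filter.atBot (nhds 0) := Real.tendsto_exp_atBot.comp h3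
    have h5 := (h4.const_mul C).const_mul (-s2)
    simp only [mul_zero] at h5
    refine h5.congr fun x => ?_
    unfold gauss; rw [hC]
  have := integral_Iic_of_hasDerivAt_of_tendsto' hderiv
    ((integrable_sub_mul_gauss hs2 a).integrableOn) htend
  rw [this]; ring

lemma denom_pos (hs2 : 0 < s2) (a c : ℝ) : 0 < ∫ x in Iic c, gauss a s2 x := by
  rw [setIntegral_pos_iff_support_of_nonneg_ae
    (Filter.Eventually.of_forall fun x => (gauss_pos hs2 a x).le)
    ((integrable_gauss hs2 a).integrableOn)]
  have : Function.support (gauss a s2) = univ := by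
    ext x; simp [Function.mem_support, (gauss_pos hs2 a x).ne']
  rw [this, univ_inter, Real.volume_Iic]
  exact ENNReal.zero_lt_top

lemma truncMean_lt_self (hs2 : 0 < s2) (a c : ℝ) : truncMean a s2 c < a := by
  have hden := denom_pos hs2 a c
  have hnum : ∫ x in Iic c, x * gauss a s2 x
      = -s2 * gauss a s2 c + a * ∫ x in Iic c, gauss a s2 x := by
    have h : ∀ x : ℝ, x * gauss a s2 x = (x - a) * gauss a s2 x + a * gauss a s2 x := by
      intro x; ring
    simp_rw [h]
    rw [integral_add ((integrable_sub_mul_gauss hs2 a).integrableOn)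
      (((integrable_gauss hs2 a).const_mul a).integrableOn),
      integral_sub_mul_gauss hs2 a c, integral_const_mul]
  unfold truncMean
  rw [hnum, div_lt_iff₀ hden]
  have : 0 < s2 * gauss a s2 c := mul_pos hs2 (gauss_pos hs2 a c)
  nlinarith

end TruncAux

section CombAux

lemma sort_insert_top (S : Finset ℕ) (a : ℕ) (ha : ∀ x ∈ S, x < a) :
    Finset.sort (insert a S) (· ≤ ·) = Finset.sort S (· ≤ ·) ++ [a] := by
  have hns : a ∉ S := fun h => lt_irrefl a (ha a h)
  refine (fun hp h1 h2 => List.Perm.eq_of_pairwise' (r := ((· ≤ ·) : ℕ → ℕ → Prop)) h1 h2 hp) ?_ ?_ ?_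
  · exact (Finset.sort_perm_toList _ _).trans ((Finset.toList_insert hns).trans
      (((Finset.sort_perm_toList _ _).symm.cons a).trans
        (List.perm_append_singleton a _).symm))
  · exact Finset.pairwise_sort _ _
  · rw [List.pairwise_append]
    refine ⟨Finset.pairwise_sort _ _, List.pairwise_singleton _ _, ?_⟩
    intro x hx y hy
    rw [List.mem_singleton] at hy
    subst hy
    exact (ha x ((Finset.mem_sort _).mp hx)).le

variable (α δ : ℝ)

lemma listWeight_shift (i b : ℕ) (rest : List ℕ) (hb : b < i) :
    listWeight (fun i j => α * δ ^ (i - j - 1)) ((i + 1) :: b :: rest)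
      = δ * listWeight (fun i j => α * δ ^ (i - j - 1)) (i :: b :: rest) := by
  show (-(α * δ ^ (i + 1 - b - 1))) * _ = δ * ((-(α * δ ^ (i - b - 1))) * _)
  have h : i + 1 - b - 1 = (i - b - 1) + 1 := by omega
  rw [h, pow_succ]
  ring

lemma pws_base (j : ℕ) :
    pathWeightSum (fun i j => α * δ ^ (i - j - 1)) (j + 1) j = -α := by
  unfold pathWeightSum
  rw [show Finset.Ioo j (j + 1) = ∅ from by
      ext x; simp only [Finset.mem_Ioo, Finset.notMem_empty, iff_false]; omega,
    Finset.powerset_empty, Finset.sum_singleton, Finset.sort_empty]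
  show (-(α * δ ^ (j + 1 - j - 1))) * 1 = -α
  rw [show j + 1 - j - 1 = 0 from by omega]
  simp

lemma pws_step (i j : ℕ) (hj : j < i) :
    pathWeightSum (fun i j => α * δ ^ (i - j - 1)) (i + 1) j
      = (δ - α) * pathWeightSum (fun i j => α * δ ^ (i - j - 1)) i j := by
  set γ : ℕ → ℕ → ℝ := fun i j => α * δ ^ (i - j - 1) with hγ
  have hIoo : Finset.Ioo j (i + 1) = insert i (Finset.Ioo j i) := by
    ext x; simp only [Finset.mem_Ioo, Finset.mem_insert]; omega
  have hni : i ∉ Finset.Ioo j i := by simp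
  unfold pathWeightSum
  rw [hIoo, Finset.sum_powerset_insert hni]
  have h1 : ∀ S ∈ (Finset.Ioo j i).powerset,
      listWeight γ ((i + 1) :: ((S.sort (· ≤ ·)).reverse ++ [j]))
        = δ * listWeight γ (i :: ((S.sort (· ≤ ·)).reverse ++ [j])) := by
    intro S hS
    rw [Finset.mem_powerset] at hS
    obtain ⟨b, rest, hbr⟩ : ∃ b rest, (S.sort (· ≤ ·)).reverse ++ [j] = b :: rest := by
      cases h : (S.sort (· ≤ ·)).reverse ++ [j] with
      | nil => exact absurd h (by simp)
      | cons b rest => exact ⟨b, rest, rfl⟩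
    have hbmem : b ∈ (S.sort (· ≤ ·)).reverse ++ [j] := by
      rw [hbr]; exact List.mem_cons_self
    have hb : b < i := by
      rcases List.mem_append.mp hbmem with h | h
      · exact (Finset.mem_Ioo.mp (hS ((Finset.mem_sort _).mp (List.mem_reverse.mp h)))).2
      · rw [List.mem_singleton] at h; omega
    rw [hbr]
    exact listWeight_shift α δ i b rest hb
  have h2 : ∀ S ∈ (Finset.Ioo j i).powerset,
      listWeight γ ((i + 1) :: (((insert i S).sort (· ≤ ·)).reverse ++ [j]))
        = -α * listWeight γ (i :: ((S.sort (· ≤ ·)).reverse ++ [j])) := by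
    intro S hS
    rw [Finset.mem_powerset] at hS
    have hlt : ∀ x ∈ S, x < i := fun x hx => (Finset.mem_Ioo.mp (hS hx)).2
    rw [sort_insert_top S i hlt, List.reverse_append, List.reverse_singleton,
      List.singleton_append, List.cons_append]
    show (-(γ (i + 1) i)) * _ = -α * _
    have hγi : γ (i + 1) i = α := by
      show α * δ ^ (i + 1 - i - 1) = α
      rw [show i + 1 - i - 1 = 0 from by omega]
      simp
    rw [hγi]
  rw [Finset.sum_congr rfl h1, Finset.sum_congr rfl h2, ← Finset.mul_sum, ← Finset.mul_sum]
  ring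

lemma pws_formula (d j : ℕ) :
    pathWeightSum (fun i j => α * δ ^ (i - j - 1)) (j + 1 + d) j = -α * (δ - α) ^ d := by
  induction d with
  | zero => simpa using pws_base α δ j
  | succ n ih =>
      have h : j + 1 + (n + 1) = (j + 1 + n) + 1 := by omega
      rw [h, pws_step α δ (j + 1 + n) j (by omega), ih, pow_succ]
      ring

end CombAux

/-- Periods are indexed `0, 1, …, L−1` (so the paper's period `i` is index `i−1`).
With `γ_{i,j} = α·δ^{i−j−1}`: the total path weight from period `i` to the first period
is `−α(δ−α)^{i−1}` (for `i ≥ 1`, i.e. the paper's `−α(δ−α)^{i−2}` for `i ≥ 2`); hence if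
`δ > α`, all total path weights are strictly negative and the pseudo-true fundamentals
satisfy `μᵢ* < μᵢ•` for every period after the first and every cutoff vector. -/
theorem path_counting_alpha_delta (L : ℕ) (hL : 3 ≤ L) (α δ s2 : ℝ)
    (hα : 0 < α) (hδ0 : 0 ≤ δ) (hδ1 : δ ≤ 1) (hs2 : 0 < s2) (μb : ℕ → ℝ) :
    let γ : ℕ → ℕ → ℝ := fun i j => α * δ ^ (i - j - 1)
    (∀ i : ℕ, 1 ≤ i → pathWeightSum γ i 0 = -α * (δ - α) ^ (i - 1)) ∧
    (α < δ →
      (∀ i j : ℕ, j < i → pathWeightSum γ i j < 0) ∧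
      ∀ (c : ℕ → ℝ) (μstar : ℕ → ℝ),
        (∀ i < L, μstar i =
          μb i - ∑ j ∈ Finset.range i, γ i j * (μstar j - truncMean (μb j) s2 (c j))) →
        ∀ i, 1 ≤ i → i < L → μstar i < μb i) := by
  intro γ
  have hγ : γ = fun i j : ℕ => α * δ ^ (i - j - 1) := rfl
  constructor
  · intro i hi
    have h := pws_formula α δ (i - 1) 0
    rw [show 0 + 1 + (i - 1) = i from by omega] at h
    rw [hγ]
    exact h
  · intro hδα
    have hpos : (0:ℝ) < δ - α := by linarith
    have hpws : ∀ i j : ℕ, j < i → pathWeightSum γ i j = -α * (δ - α) ^ (i - j - 1) := by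
      intro i j hji
      have h := pws_formula α δ (i - j - 1) j
      rw [show j + 1 + (i - j - 1) = i from by omega] at h
      rw [hγ]
      exact h
    constructor
    · intro i j hji
      rw [hpws i j hji]
      have hp := pow_pos hpos (i - j - 1)
      nlinarith
    · intro c μstar hrec
      have htpos : ∀ j : ℕ, 0 < μb j - truncMean (μb j) s2 (c j) :=
        fun j => sub_pos.mpr (truncMean_lt_self hs2 (μb j) (c j))
      have hμ0 : μstar 0 = μb 0 := by simpa using hrec 0 (by omega)
      intro i
      induction i with
      | zero => intro h _; exact absurd h (by omega)
      | succ n ih =>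
        intro _ hlt
        rcases Nat.eq_zero_or_pos n with hn | hn
        · subst hn
          have h1 := hrec 1 (by omega)
          rw [Finset.sum_range_one, hμ0] at h1
          have hg10 : γ 1 0 = α := by rw [hγ]; simp
          rw [hg10] at h1
          have h2 := htpos 0
          rw [h1]
          nlinarith
        · have ihn := ih (by omega) (by omega)
          have hn' := hrec n (by omega)
          have hsucc := hrec (n + 1) (by omega)
          rw [Finset.sum_range_succ] at hsucc
          have hshift : ∀ j ∈ Finset.range n,
              γ (n + 1) j * (μstar j - truncMean (μb j) s2 (c j))
                = δ * (γ n j * (μstar j - truncMean (μb j) s2 (c j))) := by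
            intro j hj
            rw [Finset.mem_range] at hj
            have hg : γ (n + 1) j = δ * γ n j := by
              rw [hγ]
              show α * δ ^ (n + 1 - j - 1) = δ * (α * δ ^ (n - j - 1))
              rw [show n + 1 - j - 1 = (n - j - 1) + 1 from by omega, pow_succ]
              ring
            rw [hg]; ring
          rw [Finset.sum_congr rfl hshift, ← Finset.mul_sum] at hsucc
          have hsum : ∑ j ∈ Finset.range n, γ n j * (μstar j - truncMean (μb j) s2 (c j))
              = μb n - μstar n := by linarith [hn']
          have hgn : γ (n + 1) n = α := by
            rw [hγ]
            show α * δ ^ (n + 1 - n - 1) = α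
            rw [show n + 1 - n - 1 = 0 from by omega]
            simp
          rw [hsum, hgn] at hsucc
          have h3 := htpos n
          rw [hsucc]
          nlinarith [mul_pos hpos (sub_pos.mpr ihn), mul_pos hα h3]
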